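/- For measurable functions f_1, f_2, g_1, g_2 : Ω → [−1,1] and a probability measure ν on Ω, if ∫ f_2 g_1 dν = 1 then |∫ f_1 g_1 dν − ∫ f_1 g_2 dν| + ∫ f_2 g_2 dν ≤ 1. -/
import Mathlib


open MeasureTheory

private lemma bdd_integrable {Ω : Type*} [MeasurableSpace Ω] (ν : Measure Ω)
    [IsProbabilityMeasure ν] {f : Ω → ℝ} (hm : Measurable f)
    (hb : ∀ ω, |f ω| ≤ 1) : Integrable f ν :=
  (integrable_const (1 : ℝ)).mono' hm.aestronglyMeasurable (ae_of_all _ hb)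

/-- Functional form of the original Bell inequality: for measurable functions
`f₁, f₂, g₁, g₂ : Ω → [−1,1]` and a probability measure `ν`, the perfect
correlation condition `∫ f₂ g₁ dν = 1` implies
`|∫ f₁ g₁ dν − ∫ f₁ g₂ dν| + ∫ f₂ g₂ dν ≤ 1`. -/
theorem stmt_17 {Ω : Type*} [MeasurableSpace Ω] (ν : Measure Ω)
    [IsProbabilityMeasure ν]
    (f₁ f₂ g₁ g₂ : Ω → ℝ)
    (hf₁m : Measurable f₁) (hf₂m : Measurable f₂)
    (hg₁m : Measurable g₁) (hg₂m : Measurable g₂)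
    (hf₁ : ∀ ω, f₁ ω ∈ Set.Icc (-1 : ℝ) 1) (hf₂ : ∀ ω, f₂ ω ∈ Set.Icc (-1 : ℝ) 1)
    (hg₁ : ∀ ω, g₁ ω ∈ Set.Icc (-1 : ℝ) 1) (hg₂ : ∀ ω, g₂ ω ∈ Set.Icc (-1 : ℝ) 1)
    (hperf : ∫ ω, f₂ ω * g₁ ω ∂ν = 1) :
    |(∫ ω, f₁ ω * g₁ ω ∂ν) - ∫ ω, f₁ ω * g₂ ω ∂ν| + ∫ ω, f₂ ω * g₂ ω ∂ν ≤ 1 := by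
  have babs : ∀ (f g : Ω → ℝ), (∀ ω, f ω ∈ Set.Icc (-1:ℝ) 1) →
      (∀ ω, g ω ∈ Set.Icc (-1:ℝ) 1) → ∀ ω, |f ω * g ω| ≤ 1 := by
    intro f g hf hg ω
    have h1 := hf ω; have h2 := hg ω
    simp only [Set.mem_Icc] at h1 h2
    rw [abs_mul]
    calc |f ω| * |g ω| ≤ 1 * 1 := by
          apply mul_le_mul (abs_le.2 ⟨h1.1, h1.2⟩) (abs_le.2 ⟨h2.1, h2.2⟩)
            (abs_nonneg _) zero_le_one
      _ = 1 := one_mul 1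
  have i21 : Integrable (fun ω => f₂ ω * g₁ ω) ν :=
    bdd_integrable ν (hf₂m.mul hg₁m) (babs _ _ hf₂ hg₁)
  have i22 : Integrable (fun ω => f₂ ω * g₂ ω) ν :=
    bdd_integrable ν (hf₂m.mul hg₂m) (babs _ _ hf₂ hg₂)
  have i12 : Integrable (fun ω => g₁ ω * g₂ ω) ν :=
    bdd_integrable ν (hg₁m.mul hg₂m) (babs _ _ hg₁ hg₂)
  have i11 : Integrable (fun ω => f₁ ω * g₁ ω) ν :=
    bdd_integrable ν (hf₁m.mul hg₁m) (babs _ _ hf₁ hg₁)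
  have i1g2 : Integrable (fun ω => f₁ ω * g₂ ω) ν :=
    bdd_integrable ν (hf₁m.mul hg₂m) (babs _ _ hf₁ hg₂)
  -- f₂ g₁ = 1 a.e.
  have hnn : ∀ ω, 0 ≤ 1 - f₂ ω * g₁ ω := fun ω => by
    have := babs _ _ hf₂ hg₁ ω
    have := (abs_le.1 this).2; linarith
  have hint : Integrable (fun ω => 1 - f₂ ω * g₁ ω) ν := (integrable_const 1).sub i21
  have hz : ∫ ω, (1 - f₂ ω * g₁ ω) ∂ν = 0 := by
    rw [integral_sub (integrable_const 1) i21, hperf]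
    simp
  have hae : (fun ω => 1 - f₂ ω * g₁ ω) =ᵐ[ν] 0 := by
    have := (integral_eq_zero_iff_of_nonneg (fun ω => hnn ω) hint).1 hz
    exact this
  -- hence f₂ = g₁ a.e.
  have haeq : (fun ω => f₂ ω * g₂ ω) =ᵐ[ν] (fun ω => g₁ ω * g₂ ω) := by
    filter_upwards [hae] with ω hω
    simp only [Pi.zero_apply] at hω
    have h1 : f₂ ω * g₁ ω = 1 := by linarith
    have hb2 := hf₂ ω; have hb1 := hg₁ ω
    simp only [Set.mem_Icc] at hb1 hb2
    have heq : f₂ ω = g₁ ω := by nlinarith [sq_nonneg (f₂ ω - g₁ ω)]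
    rw [heq]
  have hI : ∫ ω, f₂ ω * g₂ ω ∂ν = ∫ ω, g₁ ω * g₂ ω ∂ν := integral_congr_ae haeq
  -- main bound
  have key : |(∫ ω, f₁ ω * g₁ ω ∂ν) - ∫ ω, f₁ ω * g₂ ω ∂ν| ≤ 1 - ∫ ω, g₁ ω * g₂ ω ∂ν := by
    rw [← integral_sub i11 i1g2]
    have hb : ∀ ω, |f₁ ω * g₁ ω - f₁ ω * g₂ ω| ≤ 1 - g₁ ω * g₂ ω := by
      intro ω
      have h1 := hf₁ ω; have h2 := hg₁ ω; have h3 := hg₂ ω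
      simp only [Set.mem_Icc] at h1 h2 h3
      rw [abs_le]
      rcases le_total (g₂ ω) (g₁ ω) with hc | hc
      · constructor <;>
          nlinarith [mul_nonneg (by linarith : (0:ℝ) ≤ 1 - f₁ ω) (by linarith : (0:ℝ) ≤ g₁ ω - g₂ ω),
            mul_nonneg (by linarith : (0:ℝ) ≤ 1 + f₁ ω) (by linarith : (0:ℝ) ≤ g₁ ω - g₂ ω),
            mul_nonneg (by linarith : (0:ℝ) ≤ 1 - g₁ ω) (by linarith : (0:ℝ) ≤ 1 + g₂ ω)]
      · constructor <;>
          nlinarith [mul_nonneg (by linarith : (0:ℝ) ≤ 1 - f₁ ω) (by linarith : (0:ℝ) ≤ g₂ ω - g₁ ω),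
            mul_nonneg (by linarith : (0:ℝ) ≤ 1 + f₁ ω) (by linarith : (0:ℝ) ≤ g₂ ω - g₁ ω),
            mul_nonneg (by linarith : (0:ℝ) ≤ 1 + g₁ ω) (by linarith : (0:ℝ) ≤ 1 - g₂ ω)]
    calc |∫ ω, (f₁ ω * g₁ ω - f₁ ω * g₂ ω) ∂ν| ≤ ∫ ω, |f₁ ω * g₁ ω - f₁ ω * g₂ ω| ∂ν := by
          simpa using norm_integral_le_integral_norm (fun ω => f₁ ω * g₁ ω - f₁ ω * g₂ ω) (μ := ν)
      _ ≤ ∫ ω, (1 - g₁ ω * g₂ ω) ∂ν := by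
          apply integral_mono ((i11.sub i1g2).abs) ((integrable_const 1).sub i12)
          exact hb
      _ = 1 - ∫ ω, g₁ ω * g₂ ω ∂ν := by
          rw [integral_sub (integrable_const 1) i12]; simp
  rw [hI]
  linarith
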